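/- arXiv:0807.4138 — 5 statements merged into one kernel-verified Lean document; each statement's English description precedes it below -/
import Mathlib

section
/- Every element of H_n (the image of the pure braid group P_n under π_n) is a diagonal 2ⁿ × 2ⁿ matrix; in particular, the group H_n is commutative. -/
open Matrix

noncomputable section

/-- Kronecker product of square matrices, reindexed to `Fin (a * b)`
(lexicographically: the first factor is the most significant). -/
def kron {a b : ℕ} (A : Matrix (Fin a) (Fin a) ℂ) (B : Matrix (Fin b) (Fin b) ℂ) :
    Matrix (Fin (a * b)) (Fin (a * b)) ℂ :=
  Matrix.reindex finProdFinEquiv finProdFinEquiv (Matrix.kroneckerMap (· * ·) A B)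

/-- The Yang–Baxter solution `R` with rows `(1,0,0,0), (0,0,α,0), (0,β,0,0), (0,0,0,γ)`. -/
def Rmat (α β γ : ℂ) : Matrix (Fin 4) (Fin 4) ℂ :=
  !![1, 0, 0, 0; 0, 0, α, 0; 0, β, 0, 0; 0, 0, 0, γ]

/-- `I₂^{⊗(i−1)} ⊗ M ⊗ I₂^{⊗(n−i−1)}` as a `2ⁿ × 2ⁿ` matrix.  The size condition in the
`dite` holds precisely when `1 ≤ i ≤ n − 1`. -/
def triKron (n i : ℕ) (M : Matrix (Fin 4) (Fin 4) ℂ) :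
    Matrix (Fin (2 ^ n)) (Fin (2 ^ n)) ℂ :=
  if h : 2 ^ (i - 1) * (4 * 2 ^ (n - i - 1)) = 2 ^ n then
    Matrix.reindex (finCongr h) (finCongr h)
      (kron (1 : Matrix (Fin (2 ^ (i - 1))) (Fin (2 ^ (i - 1))) ℂ)
        (kron M (1 : Matrix (Fin (2 ^ (n - i - 1))) (Fin (2 ^ (n - i - 1))) ℂ)))
  else 1

/-- `B_i = I₂^{⊗(i−1)} ⊗ R ⊗ I₂^{⊗(n−i−1)}`. -/
def Bmat (α β γ : ℂ) (n i : ℕ) : Matrix (Fin (2 ^ n)) (Fin (2 ^ n)) ℂ :=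
  triKron n i (Rmat α β γ)


/-- The set of elements of `GL(2ⁿ, ℂ)` whose underlying matrix is one of `B_1, …, B_{n−1}`. -/
def genSet (α β γ : ℂ) (n : ℕ) : Set (GL (Fin (2 ^ n)) ℂ) :=
  {g | ∃ i : ℕ, 1 ≤ i ∧ i ≤ n - 1 ∧
    (g : Matrix (Fin (2 ^ n)) (Fin (2 ^ n)) ℂ) = Bmat α β γ n i}

/-- `G_n`: the subgroup of `GL(2ⁿ, ℂ)` generated by `B_1, …, B_{n−1}`
(the image of the braid group `B_n` under `π_n`). -/
def Gsub (α β γ : ℂ) (n : ℕ) : Subgroup (GL (Fin (2 ^ n)) ℂ) :=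
  Subgroup.closure (genSet α β γ n)

/-- `H_n`: the subgroup generated by all conjugates `g B_i² g⁻¹` with `g ∈ G_n`
(the image of the pure braid group `P_n` under `π_n`). -/
def Hsub (α β γ : ℂ) (n : ℕ) : Subgroup (GL (Fin (2 ^ n)) ℂ) :=
  Subgroup.closure
    {h | ∃ g ∈ Gsub α β γ n, ∃ b ∈ genSet α β γ n, h = g * b ^ 2 * g⁻¹}


/-- `M` is monomial with permutation `σ`: entry `(i,j)` vanishes unless `j = σ i`. -/
def MonP {N : Type*} [DecidableEq N] (M : Matrix N N ℂ) (σ : Equiv.Perm N) : Prop :=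
  ∀ i j, j ≠ σ i → M i j = 0

theorem monP_one {N : Type*} [DecidableEq N] : MonP (1 : Matrix N N ℂ) 1 := by
  intro i j h
  simp [Matrix.one_apply, fun h' : i = j => h (h' ▸ rfl)]
  tauto

theorem monP_mul {N : Type*} [Fintype N] [DecidableEq N] {A B : Matrix N N ℂ}
    {σ τ : Equiv.Perm N} (hA : MonP A σ) (hB : MonP B τ) : MonP (A * B) (σ.trans τ) := by
  intro i j h
  rw [Matrix.mul_apply]
  apply Finset.sum_eq_zero
  intro k _
  by_cases hk : k = σ i
  · rw [hB k j (by simpa [hk] using h)]; ring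
  · rw [hA i k (by tauto)]; ring

theorem monP_eq {N : Type*} [Fintype N] [DecidableEq N] {A : Matrix N N ℂ}
    {σ : Equiv.Perm N} (hA : MonP A σ) :
    A = Matrix.diagonal (fun i => A i (σ i)) * σ.permMatrix ℂ := by
  ext i j
  rw [Matrix.diagonal_mul]
  by_cases h : j = σ i
  · subst h
    simp [Equiv.Perm.permMatrix, PEquiv.toMatrix_apply, Equiv.toPEquiv_apply]
  · rw [hA i j h]
    simp only [Equiv.Perm.permMatrix, PEquiv.toMatrix_apply, Equiv.toPEquiv_apply,
      Option.mem_def, Option.some.injEq]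
    rw [if_neg (fun h' : σ i = j => h h'.symm), mul_zero]

/-- If `g` is an invertible monomial matrix wrt `σ`, then `g⁻¹` is monomial wrt `σ⁻¹`. -/
theorem monP_inv {N : Type*} [Fintype N] [DecidableEq N] (g : GL N ℂ)
    {σ : Equiv.Perm N} (hA : MonP (↑g) σ) : MonP (↑g⁻¹ : Matrix N N ℂ) σ⁻¹ := by
  have hdet : ((↑g : Matrix N N ℂ)).det ≠ 0 := by
    have := Matrix.isUnit_iff_isUnit_det (↑g : Matrix N N ℂ)
    exact (this.mp g.isUnit).ne_zero
  have hd : ∀ i, (↑g : Matrix N N ℂ) i (σ i) ≠ 0 := by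
    rw [monP_eq hA, Matrix.det_mul, Matrix.det_diagonal] at hdet
    intro i hi
    exact hdet (by rw [Finset.prod_eq_zero (Finset.mem_univ i) hi, zero_mul])
  intro i j hij
  have hmul : ((↑g⁻¹ : Matrix N N ℂ) * (↑g : Matrix N N ℂ)) i (σ j) = 0 := by
    have : (↑g⁻¹ : Matrix N N ℂ) * (↑g : Matrix N N ℂ) = 1 := g.inv_mul
    rw [this, Matrix.one_apply_ne]
    intro h
    exact hij (by rw [h, Equiv.Perm.inv_def, Equiv.symm_apply_apply])
  rw [Matrix.mul_apply] at hmul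
  rw [Finset.sum_eq_single j (fun k _ hk => by
      rw [hA k (σ j) (fun h => hk (σ.injective h).symm)]; ring)
    (fun h => absurd (Finset.mem_univ j) h)] at hmul
  exact (mul_eq_zero.mp hmul).resolve_right (hd j)

theorem monP_kron {a b : ℕ} {A : Matrix (Fin a) (Fin a) ℂ} {B : Matrix (Fin b) (Fin b) ℂ}
    {σ : Equiv.Perm (Fin a)} {τ : Equiv.Perm (Fin b)} (hA : MonP A σ) (hB : MonP B τ) :
    MonP (kron A B)
      (finProdFinEquiv.symm.trans ((σ.prodCongr τ).trans finProdFinEquiv)) := by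
  intro p q hq
  unfold kron
  rw [Matrix.reindex_apply, Matrix.submatrix_apply, Matrix.kroneckerMap_apply]
  by_cases h1 : (finProdFinEquiv.symm q).1 = σ (finProdFinEquiv.symm p).1
  · have h2 : (finProdFinEquiv.symm q).2 ≠ τ (finProdFinEquiv.symm p).2 := by
      intro h2
      apply hq
      have hpair : finProdFinEquiv.symm q
          = (σ (finProdFinEquiv.symm p).1, τ (finProdFinEquiv.symm p).2) :=
        Prod.ext h1 h2
      calc q = finProdFinEquiv (finProdFinEquiv.symm q) :=
            (Equiv.apply_symm_apply _ _).symm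
        _ = _ := by
            rw [hpair]
            simp [Equiv.trans_apply, Equiv.prodCongr_apply, Prod.map]
    rw [hB _ _ h2, mul_zero]
  · rw [hA _ _ h1, zero_mul]

theorem monP_reindex {m n : ℕ} (e : Fin m ≃ Fin n) {M : Matrix (Fin m) (Fin m) ℂ}
    {σ : Equiv.Perm (Fin m)} (h : MonP M σ) :
    MonP (Matrix.reindex e e M) ((e.symm.trans σ).trans e) := by
  intro i j hij
  rw [Matrix.reindex_apply, Matrix.submatrix_apply]
  exact h _ _ (fun hc => hij (by simp [Equiv.trans_apply, ← hc]))

/-- `M` is monomial wrt an involutive permutation (and so is every `Bmat`). -/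
def Mon2 {N : Type*} [DecidableEq N] (M : Matrix N N ℂ) : Prop :=
  ∃ σ : Equiv.Perm N, MonP M σ ∧ ∀ x, σ (σ x) = x

theorem mon2_one {N : Type*} [DecidableEq N] : Mon2 (1 : Matrix N N ℂ) :=
  ⟨1, monP_one, fun _ => rfl⟩

theorem mon2_R (α β γ : ℂ) : Mon2 (Rmat α β γ) := by
  refine ⟨Equiv.swap 1 2, ?_, fun x => Equiv.swap_apply_self 1 2 x⟩
  intro i j hij
  fin_cases i <;> fin_cases j <;> first
    | exact absurd (by decide) hij
    | simp [Rmat, Matrix.vecHead, Matrix.vecTail]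

theorem mon2_kron {a b : ℕ} {A : Matrix (Fin a) (Fin a) ℂ} {B : Matrix (Fin b) (Fin b) ℂ}
    (hA : Mon2 A) (hB : Mon2 B) : Mon2 (kron A B) := by
  obtain ⟨σ, hσ, hσ2⟩ := hA
  obtain ⟨τ, hτ, hτ2⟩ := hB
  refine ⟨_, monP_kron hσ hτ, fun x => ?_⟩
  conv_rhs => rw [← Equiv.apply_symm_apply finProdFinEquiv x]
  simp only [Equiv.trans_apply, Equiv.symm_apply_apply, Equiv.prodCongr_apply, Prod.map]
  rw [hσ2, hτ2]

theorem mon2_reindex {m n : ℕ} (e : Fin m ≃ Fin n) {M : Matrix (Fin m) (Fin m) ℂ}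
    (h : Mon2 M) : Mon2 (Matrix.reindex e e M) := by
  obtain ⟨σ, hσ, hσ2⟩ := h
  exact ⟨_, monP_reindex e hσ, fun x => by simp [Equiv.trans_apply, hσ2]⟩

theorem mon2_B (α β γ : ℂ) (n i : ℕ) : Mon2 (Bmat α β γ n i) := by
  unfold Bmat triKron
  split
  · exact mon2_reindex _ (mon2_kron mon2_one (mon2_kron (mon2_R α β γ) mon2_one))
  · exact mon2_one

theorem isDiag_of_monP_id {N : Type*} [DecidableEq N] {M : Matrix N N ℂ}
    (h : MonP M 1) : M.IsDiag :=
  fun i j hij => h i j (by simpa using hij.symm)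

theorem monP_id_of_isDiag {N : Type*} [DecidableEq N] {M : Matrix N N ℂ}
    (h : M.IsDiag) : MonP M 1 :=
  fun i j hij => h (by simpa using fun hc : i = j => hij (hc ▸ rfl))

/-- Every element of `G_n` is a monomial matrix. -/
theorem Gsub_mon (α β γ : ℂ) (n : ℕ) :
    ∀ g ∈ Gsub α β γ n, ∃ σ, MonP (↑g : Matrix (Fin (2 ^ n)) (Fin (2 ^ n)) ℂ) σ := by
  intro g hg
  induction hg using Subgroup.closure_induction with
  | mem x hx =>
      obtain ⟨i, _, _, hx⟩ := hx
      obtain ⟨σ, hσ, _⟩ := mon2_B α β γ n i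
      exact ⟨σ, hx ▸ hσ⟩
  | one => exact ⟨1, by rw [Units.val_one]; exact monP_one⟩
  | mul x y _ _ hx hy =>
      obtain ⟨σ, hσ⟩ := hx; obtain ⟨τ, hτ⟩ := hy
      exact ⟨σ.trans τ, by rw [Units.val_mul]; exact monP_mul hσ hτ⟩
  | inv x _ hx =>
      obtain ⟨σ, hσ⟩ := hx
      exact ⟨σ⁻¹, monP_inv x hσ⟩

/-- Every element of `H_n = π_n(P_n)` is a diagonal matrix; in particular `H_n` is commutative. -/
theorem stmt_5 (n : ℕ) (hn : 2 ≤ n) (α β γ : ℂ) (hα : α ≠ 0) (hβ : β ≠ 0) (hγ : γ ≠ 0) :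
    (∀ x ∈ Hsub α β γ n, ((x : GL (Fin (2 ^ n)) ℂ) :
        Matrix (Fin (2 ^ n)) (Fin (2 ^ n)) ℂ).IsDiag) ∧
    (∀ x ∈ Hsub α β γ n, ∀ y ∈ Hsub α β γ n, x * y = y * x) := by
  have hdiag : ∀ x ∈ Hsub α β γ n, ((x : GL (Fin (2 ^ n)) ℂ) :
      Matrix (Fin (2 ^ n)) (Fin (2 ^ n)) ℂ).IsDiag := by
    intro x hx
    induction hx using Subgroup.closure_induction with
    | mem x hx =>
        obtain ⟨g, hg, b, hb, rfl⟩ := hx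
        obtain ⟨σ, hσ⟩ := Gsub_mon α β γ n g hg
        obtain ⟨i, _, _, hbB⟩ := hb
        obtain ⟨τ, hτ, hτ2⟩ := mon2_B α β γ n i
        have hbτ : MonP (↑b : Matrix (Fin (2 ^ n)) (Fin (2 ^ n)) ℂ) τ := hbB ▸ hτ
        have hm : MonP (↑(g * b ^ 2 * g⁻¹) : Matrix (Fin (2 ^ n)) (Fin (2 ^ n)) ℂ)
            ((σ.trans (τ.trans τ)).trans σ⁻¹) := by
          have hco : (↑(g * b ^ 2 * g⁻¹) : Matrix (Fin (2 ^ n)) (Fin (2 ^ n)) ℂ)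
              = (↑g : Matrix (Fin (2 ^ n)) (Fin (2 ^ n)) ℂ)
                * ((↑b : Matrix (Fin (2 ^ n)) (Fin (2 ^ n)) ℂ)
                  * (↑b : Matrix (Fin (2 ^ n)) (Fin (2 ^ n)) ℂ))
                * (↑g⁻¹ : Matrix (Fin (2 ^ n)) (Fin (2 ^ n)) ℂ) := by
            rw [Units.val_mul, Units.val_mul, sq, Units.val_mul]
          rw [hco]
          exact monP_mul (monP_mul hσ (monP_mul hbτ hbτ)) (monP_inv g hσ)
        apply isDiag_of_monP_id
        intro i j hij
        apply hm i j
        simpa [Equiv.trans_apply, hτ2] using hij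
    | one => rw [Units.val_one]; exact Matrix.isDiag_one
    | mul x y _ _ hx hy =>
        rw [Units.val_mul, ← hx.diagonal_diag, ← hy.diagonal_diag,
          Matrix.diagonal_mul_diagonal]
        exact Matrix.isDiag_diagonal _
    | inv x _ hx =>
        exact isDiag_of_monP_id (by simpa using monP_inv x (monP_id_of_isDiag hx))
  refine ⟨hdiag, fun x hx y hy => ?_⟩
  have dx := hdiag x hx
  have dy := hdiag y hy
  ext1
  rw [Units.val_mul, Units.val_mul, ← dx.diagonal_diag, ← dy.diagonal_diag,
    Matrix.diagonal_mul_diagonal, Matrix.diagonal_mul_diagonal]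
  exact congrArg Matrix.diagonal (funext fun i => mul_comm _ _)
end
end

section
/- Suppose there exists an integer k ≥ 1 with (αβ)^k = 1 and γ^{2k} = 1 (equivalently, R^{2k} is the identity, i.e. all eigenvalues of R are roots of unity). Then the group H_n (the image of the pure braid group P_n) is a finite abelian group. -/
open Matrix

noncomputable section

/-! ### Auxiliary machinery -/

section Aux

variable {m : Type*}

/-- Diagonal with all diagonal entries `k`-th roots of unity. -/
def Dpred (k : ℕ) [DecidableEq m] (M : Matrix m m ℂ) : Prop :=
  M.IsDiag ∧ ∀ i, (M i i) ^ k = 1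

/-- Monomial matrix with underlying permutation `σ` (at most one nonzero entry per column,
in row `σ j`). -/
def MonoP (M : Matrix m m ℂ) : Prop :=
  ∃ σ : Equiv.Perm m, ∀ i j, M i j ≠ 0 → i = σ j

lemma Dpred_one (k : ℕ) [DecidableEq m] : Dpred k (1 : Matrix m m ℂ) :=
  ⟨Matrix.isDiag_one, fun i => by simp⟩

lemma MonoP_one [DecidableEq m] : MonoP (1 : Matrix m m ℂ) :=
  ⟨1, fun i j h => by
    by_contra hij
    exact h (Matrix.one_apply_ne fun hh => hij (hh ▸ rfl))⟩

lemma Dpred_kron {k a b : ℕ} {A : Matrix (Fin a) (Fin a) ℂ} {B : Matrix (Fin b) (Fin b) ℂ}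
    (hA : Dpred k A) (hB : Dpred k B) : Dpred k (kron A B) := by
  constructor
  · intro i j hij
    simp only [kron, Matrix.reindex_apply, Matrix.submatrix_apply, Matrix.kroneckerMap_apply]
    have hpq : finProdFinEquiv.symm i ≠ finProdFinEquiv.symm j := fun h =>
      hij (finProdFinEquiv.symm.injective h)
    by_cases h1 : (finProdFinEquiv.symm i).1 = (finProdFinEquiv.symm j).1
    · have h2 : (finProdFinEquiv.symm i).2 ≠ (finProdFinEquiv.symm j).2 := by
        intro h2; exact hpq (Prod.ext h1 h2)
      rw [hB.1 h2, mul_zero]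
    · rw [hA.1 h1, zero_mul]
  · intro i
    simp only [kron, Matrix.reindex_apply, Matrix.submatrix_apply, Matrix.kroneckerMap_apply]
    rw [mul_pow, hA.2, hB.2, one_mul]

lemma MonoP_kron {a b : ℕ} {A : Matrix (Fin a) (Fin a) ℂ} {B : Matrix (Fin b) (Fin b) ℂ}
    (hA : MonoP A) (hB : MonoP B) : MonoP (kron A B) := by
  obtain ⟨σA, hσA⟩ := hA
  obtain ⟨σB, hσB⟩ := hB
  refine ⟨finProdFinEquiv.symm.trans ((σA.prodCongr σB).trans finProdFinEquiv), fun i j h => ?_⟩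
  simp only [kron, Matrix.reindex_apply, Matrix.submatrix_apply, Matrix.kroneckerMap_apply] at h
  have h1 := hσA _ _ (left_ne_zero_of_mul h)
  have h2 := hσB _ _ (right_ne_zero_of_mul h)
  have h3 : finProdFinEquiv.symm i =
      (σA.prodCongr σB) (finProdFinEquiv.symm j) := Prod.ext h1 h2
  have h4 := congrArg finProdFinEquiv h3
  rw [Equiv.apply_symm_apply] at h4
  simpa only [Equiv.trans_apply] using h4

lemma Dpred_reindex {k a b : ℕ} (e : Fin a ≃ Fin b) {A : Matrix (Fin a) (Fin a) ℂ}
    (hA : Dpred k A) : Dpred k (Matrix.reindex e e A) := by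
  constructor
  · intro i j hij
    simp only [Matrix.reindex_apply, Matrix.submatrix_apply]
    exact hA.1 fun h => hij (by simpa using congrArg e h)
  · intro i
    simp only [Matrix.reindex_apply, Matrix.submatrix_apply]
    exact hA.2 _

lemma MonoP_reindex {a b : ℕ} (e : Fin a ≃ Fin b) {A : Matrix (Fin a) (Fin a) ℂ}
    (hA : MonoP A) : MonoP (Matrix.reindex e e A) := by
  obtain ⟨σ, hσ⟩ := hA
  refine ⟨e.symm.trans (σ.trans e), fun i j h => ?_⟩
  simp only [Matrix.reindex_apply, Matrix.submatrix_apply] at h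
  have h3 := congrArg e (hσ _ _ h)
  rw [Equiv.apply_symm_apply] at h3
  simpa only [Equiv.trans_apply] using h3

lemma Dpred_triKron {k n i : ℕ} {M : Matrix (Fin 4) (Fin 4) ℂ}
    (hM : Dpred k M) : Dpred k (triKron n i M) := by
  unfold triKron
  split
  · exact Dpred_reindex _ (Dpred_kron (Dpred_one k) (Dpred_kron hM (Dpred_one k)))
  · exact Dpred_one k

lemma MonoP_triKron {n i : ℕ} {M : Matrix (Fin 4) (Fin 4) ℂ}
    (hM : MonoP M) : MonoP (triKron n i M) := by
  unfold triKron
  split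
  · exact MonoP_reindex _ (MonoP_kron MonoP_one (MonoP_kron hM MonoP_one))
  · exact MonoP_one

lemma MonoP_Rmat (α β γ : ℂ) : MonoP (Rmat α β γ) := by
  refine ⟨Equiv.swap 1 2, fun i j h => ?_⟩
  fin_cases i <;> fin_cases j <;>
    simp_all [Rmat, Matrix.vecHead, Matrix.vecTail] <;> decide

lemma Rmat_sq (α β γ : ℂ) :
    Rmat α β γ * Rmat α β γ = Matrix.diagonal ![1, α * β, α * β, γ * γ] := by
  ext i j
  fin_cases i <;> fin_cases j <;>
    simp [Rmat, Matrix.mul_apply, Fin.sum_univ_four, Matrix.diagonal, Matrix.vecHead,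
      Matrix.vecTail, mul_comm]

lemma Dpred_Rmat_sq {α β γ : ℂ} {k : ℕ} (hab : (α * β) ^ k = 1) (hg : γ ^ (2 * k) = 1) :
    Dpred k (Rmat α β γ * Rmat α β γ) := by
  rw [Rmat_sq]
  refine ⟨Matrix.isDiag_diagonal _, fun i => ?_⟩
  rw [Matrix.diagonal_apply_eq]
  fin_cases i
  · simp
  · simpa using hab
  · simpa using hab
  · show (γ * γ) ^ k = 1
    calc (γ * γ) ^ k = γ ^ (2 * k) := by rw [two_mul, pow_add, mul_pow]
    _ = 1 := hg

lemma kron_mul {a b : ℕ} (A C : Matrix (Fin a) (Fin a) ℂ) (B D : Matrix (Fin b) (Fin b) ℂ) :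
    kron A B * kron C D = kron (A * C) (B * D) := by
  unfold kron
  simp only [Matrix.reindex_apply, Matrix.submatrix_mul_equiv, Matrix.mul_kronecker_mul]

lemma triKron_mul (n i : ℕ) (M N : Matrix (Fin 4) (Fin 4) ℂ) :
    triKron n i M * triKron n i N = triKron n i (M * N) := by
  unfold triKron
  split
  · simp only [Matrix.reindex_apply, Matrix.submatrix_mul_equiv]
    rw [kron_mul, kron_mul]
    simp only [one_mul]
  · rw [one_mul]

lemma Dpred_Bmat_sq {α β γ : ℂ} {k n i : ℕ} (hab : (α * β) ^ k = 1) (hg : γ ^ (2 * k) = 1) :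
    Dpred k (Bmat α β γ n i * Bmat α β γ n i) := by
  unfold Bmat
  rw [triKron_mul]
  exact Dpred_triKron (Dpred_Rmat_sq hab hg)

lemma MonoP_comm {m : Type*} [Fintype m] [DecidableEq m] {M : Matrix m m ℂ}
    (σ : Equiv.Perm m) (hM : ∀ i j, M i j ≠ 0 → i = σ j) (d : m → ℂ) :
    M * Matrix.diagonal d = Matrix.diagonal (fun i => d (σ⁻¹ i)) * M := by
  ext i j
  rw [Matrix.mul_diagonal, Matrix.diagonal_mul]
  by_cases h : M i j = 0
  · simp [h]
  · have := hM i j h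
    subst this
    rw [Equiv.Perm.inv_def, Equiv.symm_apply_apply, mul_comm]

variable {N : ℕ}

/-- The subgroup of invertible diagonal matrices whose entries are `k`-th roots of unity. -/
def Dsub (N k : ℕ) (hk : 1 ≤ k) : Subgroup (GL (Fin N) ℂ) where
  carrier := {g | Dpred k (g : Matrix (Fin N) (Fin N) ℂ)}
  one_mem' := by simpa using Dpred_one (m := Fin N) k
  mul_mem' := by
    rintro a b ⟨ha1, ha2⟩ ⟨hb1, hb2⟩
    show Dpred k ((a * b : GL (Fin N) ℂ) : Matrix (Fin N) (Fin N) ℂ)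
    rw [Units.val_mul, ← ha1.diagonal_diag, ← hb1.diagonal_diag,
      Matrix.diagonal_mul_diagonal]
    refine ⟨Matrix.isDiag_diagonal _, fun i => ?_⟩
    rw [Matrix.diagonal_apply_eq, mul_pow]
    have h1 := ha2 i
    have h2 := hb2 i
    simp only [Matrix.diag_apply]
    rw [h1, h2, one_mul]
  inv_mem' := by
    rintro g ⟨hg1, hg2⟩
    show Dpred k ((g⁻¹ : GL (Fin N) ℂ) : Matrix (Fin N) (Fin N) ℂ)
    have hval : ((g⁻¹ : GL (Fin N) ℂ) : Matrix (Fin N) (Fin N) ℂ) =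
        Matrix.diagonal (fun i => ((g : Matrix (Fin N) (Fin N) ℂ) i i)⁻¹) := by
      have hne : ∀ i, (g : Matrix (Fin N) (Fin N) ℂ) i i ≠ 0 := by
        intro i h0
        have := hg2 i
        rw [h0, zero_pow (by omega)] at this
        exact zero_ne_one this
      have hmul : (g : Matrix (Fin N) (Fin N) ℂ) *
          Matrix.diagonal (fun i => ((g : Matrix (Fin N) (Fin N) ℂ) i i)⁻¹) = 1 := by
        ext i j
        rw [Matrix.mul_diagonal]
        by_cases hij : i = j
        · subst hij
          rw [Matrix.one_apply_eq, mul_inv_cancel₀ (hne i)]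
        · rw [hg1 hij, zero_mul, Matrix.one_apply_ne hij]
      calc ((g⁻¹ : GL (Fin N) ℂ) : Matrix (Fin N) (Fin N) ℂ)
          = ((g⁻¹ : GL (Fin N) ℂ) : Matrix (Fin N) (Fin N) ℂ) *
            ((g : Matrix (Fin N) (Fin N) ℂ) *
              Matrix.diagonal (fun i => ((g : Matrix (Fin N) (Fin N) ℂ) i i)⁻¹)) := by
            rw [hmul, mul_one]
        _ = (((g⁻¹ * g : GL (Fin N) ℂ)) : Matrix (Fin N) (Fin N) ℂ) *
              Matrix.diagonal (fun i => ((g : Matrix (Fin N) (Fin N) ℂ) i i)⁻¹) := by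
            rw [Units.val_mul, mul_assoc]
        _ = Matrix.diagonal (fun i => ((g : Matrix (Fin N) (Fin N) ℂ) i i)⁻¹) := by
            rw [inv_mul_cancel, Units.val_one, one_mul]
    rw [hval]
    refine ⟨Matrix.isDiag_diagonal _, fun i => ?_⟩
    rw [Matrix.diagonal_apply_eq, inv_pow, hg2 i, inv_one]

lemma mem_Dsub {N k : ℕ} {hk : 1 ≤ k} {g : GL (Fin N) ℂ} :
    g ∈ Dsub N k hk ↔ Dpred k (g : Matrix (Fin N) (Fin N) ℂ) := Iff.rfl

lemma mono_mem_normalizer {N k : ℕ} {hk : 1 ≤ k} {u : GL (Fin N) ℂ}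
    (hu : MonoP (u : Matrix (Fin N) (Fin N) ℂ)) :
    u ∈ Subgroup.normalizer (Dsub N k hk : Set (GL (Fin N) ℂ)) := by
  obtain ⟨σ, hσ⟩ := hu
  -- key computations
  have key1 : ∀ h : GL (Fin N) ℂ, Dpred k (h : Matrix (Fin N) (Fin N) ℂ) →
      Dpred k ((u * h * u⁻¹ : GL (Fin N) ℂ) : Matrix (Fin N) (Fin N) ℂ) := by
    intro h hh
    have hval : ((u * h * u⁻¹ : GL (Fin N) ℂ) : Matrix (Fin N) (Fin N) ℂ) =
        Matrix.diagonal (fun i => Matrix.diag (h : Matrix (Fin N) (Fin N) ℂ) (σ⁻¹ i)) := by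
      rw [Units.val_mul, Units.val_mul]
      conv_lhs => rw [← hh.1.diagonal_diag]
      have huu : (u : Matrix (Fin N) (Fin N) ℂ) *
          ((u⁻¹ : GL (Fin N) ℂ) : Matrix (Fin N) (Fin N) ℂ) = 1 := by
        rw [← Units.val_mul, mul_inv_cancel, Units.val_one]
      rw [MonoP_comm σ hσ, mul_assoc, huu, mul_one]
    rw [hval]
    exact ⟨Matrix.isDiag_diagonal _, fun i => by rw [Matrix.diagonal_apply_eq]; exact hh.2 _⟩
  have key2 : ∀ h : GL (Fin N) ℂ, Dpred k (h : Matrix (Fin N) (Fin N) ℂ) →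
      Dpred k ((u⁻¹ * h * u : GL (Fin N) ℂ) : Matrix (Fin N) (Fin N) ℂ) := by
    intro h hh
    have hcomm : (u : Matrix (Fin N) (Fin N) ℂ) *
        Matrix.diagonal (fun i => (h : Matrix (Fin N) (Fin N) ℂ) (σ i) (σ i)) =
        (h : Matrix (Fin N) (Fin N) ℂ) * (u : Matrix (Fin N) (Fin N) ℂ) := by
      rw [MonoP_comm σ hσ]
      congr 1
      conv_rhs => rw [← hh.1.diagonal_diag]
      simp only [Equiv.Perm.inv_def, Equiv.apply_symm_apply]
      rfl
    have hval : ((u⁻¹ * h * u : GL (Fin N) ℂ) : Matrix (Fin N) (Fin N) ℂ) =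
        Matrix.diagonal (fun i => (h : Matrix (Fin N) (Fin N) ℂ) (σ i) (σ i)) := by
      have huu : ((u⁻¹ : GL (Fin N) ℂ) : Matrix (Fin N) (Fin N) ℂ) *
          (u : Matrix (Fin N) (Fin N) ℂ) = 1 := by
        rw [← Units.val_mul, inv_mul_cancel, Units.val_one]
      rw [Units.val_mul, Units.val_mul, mul_assoc, ← hcomm, ← mul_assoc, huu, one_mul]
    rw [hval]
    exact ⟨Matrix.isDiag_diagonal _, fun i => by rw [Matrix.diagonal_apply_eq]; exact hh.2 _⟩
  rw [Subgroup.mem_normalizer_iff]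
  intro h
  constructor
  · exact fun hh => key1 h hh
  · intro hh
    have := key2 (u * h * u⁻¹) hh
    have heq : u⁻¹ * (u * h * u⁻¹) * u = h := by group
    rwa [heq] at this

end Aux

/-- If all eigenvalues of `R` are roots of unity (there is `k ≥ 1` with `(αβ)^k = 1` and
`γ^{2k} = 1`, equivalently `R^{2k} = I`), then `H_n = π_n(P_n)` is a finite abelian group. -/
theorem stmt_6 (n : ℕ) (hn : 2 ≤ n) (α β γ : ℂ) (hα : α ≠ 0) (hβ : β ≠ 0) (hγ : γ ≠ 0)
    (hroots : ∃ k : ℕ, 1 ≤ k ∧ (α * β) ^ k = 1 ∧ γ ^ (2 * k) = 1) :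
    Finite (Hsub α β γ n) ∧
    (∀ x ∈ Hsub α β γ n, ∀ y ∈ Hsub α β γ n, x * y = y * x) := by
  classical
  obtain ⟨k, hk, hab, hg⟩ := hroots
  set N := 2 ^ n with hN
  set D := Dsub N k hk with hD
  -- G normalizes D
  have hGnorm : Gsub α β γ n ≤ Subgroup.normalizer (D : Set (GL (Fin N) ℂ)) := by
    rw [Gsub, Subgroup.closure_le]
    rintro b ⟨i, -, -, hval⟩
    exact mono_mem_normalizer (by rw [hval]; exact MonoP_triKron (MonoP_Rmat α β γ))
  -- H ≤ D
  have hHD : Hsub α β γ n ≤ D := by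
    rw [Hsub, Subgroup.closure_le]
    rintro x ⟨g, hgG, b, ⟨i, -, -, hbval⟩, rfl⟩
    have hb2 : b ^ 2 ∈ D := by
      rw [hD, mem_Dsub]
      have : ((b ^ 2 : GL (Fin N) ℂ) : Matrix (Fin N) (Fin N) ℂ) =
          (b : Matrix (Fin N) (Fin N) ℂ) * (b : Matrix (Fin N) (Fin N) ℂ) := by
        rw [Units.val_pow_eq_pow_val, pow_two]
      rw [this, hbval]
      exact Dpred_Bmat_sq hab hg
    have hgnorm := hGnorm hgG
    rw [Subgroup.mem_normalizer_iff] at hgnorm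
    exact (hgnorm (b ^ 2)).mp hb2
  -- D is finite
  have hroots_fin : Finite {x : ℂ // x ^ k = 1} := by
    have hfin : {x : ℂ | x ^ k = 1}.Finite := by
      refine Set.Finite.subset (Polynomial.nthRoots k (1 : ℂ)).toFinset.finite_toSet ?_
      intro x hx
      rw [Finset.mem_coe, Multiset.mem_toFinset, Polynomial.mem_nthRoots (by omega : 0 < k)]
      exact hx
    exact hfin.to_subtype
  have hDfin : Finite D := by
    have hinj : Function.Injective (fun g : D =>
        (fun i => (⟨((g : GL (Fin N) ℂ) : Matrix (Fin N) (Fin N) ℂ) i i, g.2.2 i⟩ :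
          {x : ℂ // x ^ k = 1}))) := by
      rintro ⟨g₁, hg₁⟩ ⟨g₂, hg₂⟩ hfe
      have heq : ∀ i, ((g₁ : GL (Fin N) ℂ) : Matrix (Fin N) (Fin N) ℂ) i i =
          ((g₂ : GL (Fin N) ℂ) : Matrix (Fin N) (Fin N) ℂ) i i := by
        intro i
        exact congrArg Subtype.val (congrFun hfe i)
      ext i j : 4
      by_cases hij : i = j
      · subst hij; exact heq i
      · rw [hg₁.1 hij, hg₂.1 hij]
    exact Finite.of_injective _ hinj
  refine ⟨?_, ?_⟩
  · have h1 : ((D : Subgroup (GL (Fin N) ℂ)) : Set (GL (Fin N) ℂ)).Finite :=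
      Set.finite_coe_iff.mp hDfin
    have h2 : ((Hsub α β γ n : Subgroup (GL (Fin N) ℂ)) : Set (GL (Fin N) ℂ)).Finite :=
      h1.subset hHD
    exact Set.finite_coe_iff.mpr h2
  · intro x hx y hy
    have hxD := hHD hx
    have hyD := hHD hy
    ext : 1
    rw [Units.val_mul, Units.val_mul, ← hxD.1.diagonal_diag, ← hyD.1.diagonal_diag,
      Matrix.diagonal_mul_diagonal, Matrix.diagonal_mul_diagonal]
    exact congrArg _ (funext fun i => mul_comm _ _)
end
end

section
/- For n ≥ 4, the matrix B_1 B_3 is not a diagonal matrix, and for n = 3, the matrix B_2 B_1 is not a diagonal matrix. (These witness that the classes of the permutations (12)(34) and (123) respectively are nontrivial in G_n / H_n.) -/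
open Matrix

noncomputable section

def midIdx (e x : ℕ) : Fin 4 :=
  ⟨x % (4 * 2 ^ e) / 2 ^ e, by
    have h0 : 0 < (2:ℕ) ^ e := Nat.pow_pos (by norm_num)
    exact (Nat.div_lt_iff_lt_mul h0).mpr (Nat.mod_lt _ (by positivity))⟩

lemma triKron_apply (n i : ℕ) (M : Matrix (Fin 4) (Fin 4) ℂ)
    (h : 2 ^ (i - 1) * (4 * 2 ^ (n - i - 1)) = 2 ^ n) (x y : Fin (2 ^ n)) :
    triKron n i M x y =
      (if (x:ℕ) / (4 * 2 ^ (n - i - 1)) = (y:ℕ) / (4 * 2 ^ (n - i - 1)) then (1:ℂ) else 0) *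
      (M (midIdx (n - i - 1) x) (midIdx (n - i - 1) y) *
       if (x:ℕ) % 2 ^ (n - i - 1) = (y:ℕ) % 2 ^ (n - i - 1) then (1:ℂ) else 0) := by
  have hdvd : (2:ℕ) ^ (n - i - 1) ∣ 4 * 2 ^ (n - i - 1) := ⟨4, by ring⟩
  simp only [triKron, dif_pos h, Matrix.reindex_apply, Matrix.submatrix_apply, kron,
    finCongr_symm, finCongr_apply, Matrix.kroneckerMap_apply, finProdFinEquiv_symm_apply,
    Matrix.one_apply, Fin.ext_iff, Fin.coe_divNat, Fin.coe_modNat, Fin.coe_cast,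
    Nat.mod_mod_of_dvd _ hdvd, midIdx]
  rfl

lemma Rcol1 (α β γ : ℂ) (r : Fin 4) : Rmat α β γ r 1 = if r = 2 then β else 0 := by
  fin_cases r <;> simp [Rmat]

lemma R00 (α β γ : ℂ) : Rmat α β γ 0 0 = 1 := by simp [Rmat]
lemma R21 (α β γ : ℂ) : Rmat α β γ 2 1 = β := by simp [Rmat]

lemma cdiv (c d b : ℕ) (hb : 0 < b) : (c * b) / (d * b) = c / d :=
  Nat.mul_div_mul_right _ _ hb

lemma cmod (c d b : ℕ) : (c * b) % (d * b) = (c % d) * b :=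
  Nat.mul_mod_mul_right _ _ _

lemma recon (b u v : ℕ) (h1 : u / (4 * b) = v / (4 * b))
    (h2 : u % (4 * b) / b = v % (4 * b) / b) (h3 : u % b = v % b) : u = v := by
  have hu := Nat.mod_mod_of_dvd u (⟨4, mul_comm 4 b⟩ : b ∣ 4 * b)
  have hv := Nat.mod_mod_of_dvd v (⟨4, mul_comm 4 b⟩ : b ∣ 4 * b)
  conv_lhs => rw [← Nat.div_add_mod u (4 * b), ← Nat.div_add_mod (u % (4 * b)) b]
  conv_rhs => rw [← Nat.div_add_mod v (4 * b), ← Nat.div_add_mod (v % (4 * b)) b]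
  rw [h1, h2, hu, hv, h3]


/-- For `n ≥ 4`, `B_1 B_3` is not diagonal, and for `n = 3`, `B_2 B_1` is not diagonal
(witnessing that the classes of `(12)(34)` resp. `(123)` are nontrivial in `G_n / H_n`). -/
theorem stmt_8 (n : ℕ) (hn : 3 ≤ n) (α β γ : ℂ) (hα : α ≠ 0) (hβ : β ≠ 0) (hγ : γ ≠ 0) :
    (4 ≤ n → ¬ (Bmat α β γ n 1 * Bmat α β γ n 3).IsDiag) ∧
    (n = 3 → ¬ (Bmat α β γ n 2 * Bmat α β γ n 1).IsDiag) := by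
  constructor
  · intro hn4

    set b : ℕ := 2 ^ (n - 4) with hbdef
    have hb : 0 < b := Nat.pow_pos (by norm_num)
    have E1 : (2:ℕ) ^ (n - 1 - 1) = 4 * b := by
      rw [hbdef, show n - 1 - 1 = 2 + (n - 4) by omega, pow_add]; norm_num
    have E3 : (2:ℕ) ^ (n - 3 - 1) = 1 * b := by rw [hbdef, show n - 3 - 1 = n - 4 by omega]; ring
    have E16 : (2:ℕ) ^ n = 16 * b := by
      rw [hbdef, show n = 4 + (n - 4) by omega, pow_add]; norm_num
    have h1 : (2:ℕ) ^ (1 - 1) * (4 * 2 ^ (n - 1 - 1)) = 2 ^ n := by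
      rw [E1, E16]; ring
    have h3 : (2:ℕ) ^ (3 - 1) * (4 * 2 ^ (n - 3 - 1)) = 2 ^ n := by
      rw [E3, E16]; ring
    have lt16 : ∀ c : ℕ, c < 16 → c * b < 2 ^ n := by
      intro c hc; rw [E16]; exact (Nat.mul_lt_mul_right hb).mpr hc
    set i0 : Fin (2 ^ n) := ⟨10 * b, lt16 10 (by norm_num)⟩ with hi0
    set j0 : Fin (2 ^ n) := ⟨5 * b, lt16 5 (by norm_num)⟩ with hj0
    set k0 : Fin (2 ^ n) := ⟨6 * b, lt16 6 (by norm_num)⟩ with hk0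
    intro hd
    have hne : i0 ≠ j0 := by
      simp only [hi0, hj0, Ne, Fin.mk.injEq]; omega
    have hzero : (Bmat α β γ n 1 * Bmat α β γ n 3) i0 j0 = 0 := hd hne
    rw [Matrix.mul_apply] at hzero
    rw [Finset.sum_eq_single_of_mem k0 (Finset.mem_univ _)] at hzero
    · -- main term: B1 i0 k0 * B3 k0 j0 = β * β
      rw [Bmat, Bmat, triKron_apply _ 1 _ h1, triKron_apply _ 3 _ h3] at hzero
      have m1 : midIdx (n - 1 - 1) (i0 : ℕ) = 2 := by
        apply Fin.ext
        show (10 * b) % (4 * 2 ^ (n - 1 - 1)) / 2 ^ (n - 1 - 1) = 2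
        rw [E1, show 4 * (4 * b) = 16 * b by ring, cmod, cdiv _ _ _ hb]
      have m2 : midIdx (n - 1 - 1) (k0 : ℕ) = 1 := by
        apply Fin.ext
        show (6 * b) % (4 * 2 ^ (n - 1 - 1)) / 2 ^ (n - 1 - 1) = 1
        rw [E1, show 4 * (4 * b) = 16 * b by ring, cmod, cdiv _ _ _ hb]
      have m3 : midIdx (n - 3 - 1) (k0 : ℕ) = 2 := by
        apply Fin.ext
        show (6 * b) % (4 * 2 ^ (n - 3 - 1)) / 2 ^ (n - 3 - 1) = 2
        rw [E3, one_mul, cmod, show (6:ℕ) % 4 = 2 by norm_num, Nat.mul_div_cancel _ hb]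
      have m4 : midIdx (n - 3 - 1) (j0 : ℕ) = 1 := by
        apply Fin.ext
        show (5 * b) % (4 * 2 ^ (n - 3 - 1)) / 2 ^ (n - 3 - 1) = 1
        rw [E3, one_mul, cmod, show (5:ℕ) % 4 = 1 by norm_num, Nat.mul_div_cancel _ hb]
      rw [m1, m2, m3, m4, R21] at hzero
      have c1 : (i0 : ℕ) / (4 * 2 ^ (n - 1 - 1)) = (k0 : ℕ) / (4 * 2 ^ (n - 1 - 1)) := by
        show (10 * b) / (4 * 2 ^ (n - 1 - 1)) = (6 * b) / (4 * 2 ^ (n - 1 - 1))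
        rw [E1, show 4 * (4 * b) = 16 * b by ring, cdiv _ _ _ hb, cdiv _ _ _ hb]
      have c2 : (i0 : ℕ) % 2 ^ (n - 1 - 1) = (k0 : ℕ) % 2 ^ (n - 1 - 1) := by
        show (10 * b) % 2 ^ (n - 1 - 1) = (6 * b) % 2 ^ (n - 1 - 1)
        rw [E1, cmod, cmod]
      have c3 : (k0 : ℕ) / (4 * 2 ^ (n - 3 - 1)) = (j0 : ℕ) / (4 * 2 ^ (n - 3 - 1)) := by
        show (6 * b) / (4 * 2 ^ (n - 3 - 1)) = (5 * b) / (4 * 2 ^ (n - 3 - 1))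
        rw [E3, show 4 * (1 * b) = 4 * b by ring, cdiv _ _ _ hb, cdiv _ _ _ hb]
      have c4 : (k0 : ℕ) % 2 ^ (n - 3 - 1) = (j0 : ℕ) % 2 ^ (n - 3 - 1) := by
        show (6 * b) % 2 ^ (n - 3 - 1) = (5 * b) % 2 ^ (n - 3 - 1)
        rw [E3, show (1:ℕ) * b = b by ring, Nat.mul_mod_left, Nat.mul_mod_left]
      rw [if_pos c1, if_pos c2, if_pos c3, if_pos c4] at hzero
      simp only [one_mul, mul_one] at hzero
      exact hβ (by
        have := mul_self_eq_zero.mp hzero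
        exact this)
    · -- other terms vanish
      intro k _ hk
      have hB3 : Bmat α β γ n 3 k j0 = 0 := by
        rw [Bmat, triKron_apply _ 3 _ h3]
        by_contra hne0
        have f1 : (k : ℕ) / (4 * 2 ^ (n - 3 - 1)) = (j0 : ℕ) / (4 * 2 ^ (n - 3 - 1)) := by
          by_contra hc; rw [if_neg hc, zero_mul] at hne0; exact hne0 rfl
        have f3 : (k : ℕ) % 2 ^ (n - 3 - 1) = (j0 : ℕ) % 2 ^ (n - 3 - 1) := by
          by_contra hc; rw [if_neg hc, mul_zero, mul_zero] at hne0; exact hne0 rfl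
        have m4 : midIdx (n - 3 - 1) (j0 : ℕ) = 1 := by
          apply Fin.ext
          show (5 * b) % (4 * 2 ^ (n - 3 - 1)) / 2 ^ (n - 3 - 1) = 1
          rw [E3, one_mul, cmod, show (5:ℕ) % 4 = 1 by norm_num, Nat.mul_div_cancel _ hb]
        rw [m4, Rcol1] at hne0
        have f2 : midIdx (n - 3 - 1) (k : ℕ) = 2 := by
          by_contra hc; rw [if_neg hc, zero_mul, mul_zero] at hne0; exact hne0 rfl
        have f2' : (k : ℕ) % (4 * 2 ^ (n - 3 - 1)) / 2 ^ (n - 3 - 1) = 2 := by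
          have := congrArg Fin.val f2; exact this
        -- reconstruct k = 6 * b
        apply hk
        apply Fin.ext
        show (k : ℕ) = 6 * b
        have hj5 : (j0 : ℕ) = 5 * b := rfl
        rw [E3, show (1:ℕ) * b = b by ring] at f1 f3 f2'
        rw [show 4 * b = 4 * b from rfl] at f1
        apply recon b
        · rw [f1, hj5, cdiv _ _ _ hb, show (6:ℕ) * b / (4 * b) = 6 / 4 from cdiv _ _ _ hb]
        · rw [f2', show (6:ℕ) * b % (4 * b) / b = 2 from by
            rw [cmod, show (6:ℕ)%4 = 2 by norm_num, Nat.mul_div_cancel _ hb]]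
        · rw [f3, hj5, Nat.mul_mod_left, Nat.mul_mod_left]
      rw [hB3, mul_zero]
  · intro hn3
    subst hn3

    have h2 : (2:ℕ) ^ (2 - 1) * (4 * 2 ^ (3 - 2 - 1)) = 2 ^ 3 := by norm_num
    have h1 : (2:ℕ) ^ (1 - 1) * (4 * 2 ^ (3 - 1 - 1)) = 2 ^ 3 := by norm_num
    set i0 : Fin (2 ^ 3) := ⟨4, by norm_num⟩ with hi0
    set j0 : Fin (2 ^ 3) := ⟨2, by norm_num⟩ with hj0
    intro hd
    have hne : i0 ≠ j0 := by simp only [hi0, hj0, Ne, Fin.mk.injEq]; omega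
    have hzero : (Bmat α β γ 3 2 * Bmat α β γ 3 1) i0 j0 = 0 := hd hne
    rw [Matrix.mul_apply] at hzero
    rw [Finset.sum_eq_single_of_mem i0 (Finset.mem_univ _)] at hzero
    · rw [Bmat, Bmat, triKron_apply _ 2 _ h2, triKron_apply _ 1 _ h1] at hzero
      have m1 : midIdx (3 - 2 - 1) (i0 : ℕ) = 0 := by
        apply Fin.ext; show 4 % (4 * 2 ^ (3 - 2 - 1)) / 2 ^ (3 - 2 - 1) = 0; norm_num
      have m2 : midIdx (3 - 1 - 1) (i0 : ℕ) = 2 := by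
        apply Fin.ext; show 4 % (4 * 2 ^ (3 - 1 - 1)) / 2 ^ (3 - 1 - 1) = 2; norm_num
      have m3 : midIdx (3 - 1 - 1) (j0 : ℕ) = 1 := by
        apply Fin.ext; show 2 % (4 * 2 ^ (3 - 1 - 1)) / 2 ^ (3 - 1 - 1) = 1; norm_num
      have c1 : (i0 : ℕ) / (4 * 2 ^ (3 - 1 - 1)) = (j0 : ℕ) / (4 * 2 ^ (3 - 1 - 1)) := by
        show 4 / (4 * 2 ^ (3 - 1 - 1)) = 2 / (4 * 2 ^ (3 - 1 - 1)); norm_num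
      have c2 : (i0 : ℕ) % 2 ^ (3 - 1 - 1) = (j0 : ℕ) % 2 ^ (3 - 1 - 1) := by
        show 4 % 2 ^ (3 - 1 - 1) = 2 % 2 ^ (3 - 1 - 1); norm_num
      rw [m1, m2, m3, R00, R21, if_pos rfl, if_pos rfl, if_pos c1, if_pos c2] at hzero
      simp only [one_mul, mul_one] at hzero
      exact hβ hzero
    · intro k _ hk
      have hB1 : Bmat α β γ 3 1 k j0 = 0 := by
        rw [Bmat, triKron_apply _ 1 _ h1]
        by_contra hne0
        have f1 : (k : ℕ) / (4 * 2 ^ (3 - 1 - 1)) = (j0 : ℕ) / (4 * 2 ^ (3 - 1 - 1)) := by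
          by_contra hc; rw [if_neg hc, zero_mul] at hne0; exact hne0 rfl
        have f3 : (k : ℕ) % 2 ^ (3 - 1 - 1) = (j0 : ℕ) % 2 ^ (3 - 1 - 1) := by
          by_contra hc; rw [if_neg hc, mul_zero, mul_zero] at hne0; exact hne0 rfl
        have m3 : midIdx (3 - 1 - 1) (j0 : ℕ) = 1 := by
          apply Fin.ext; show 2 % (4 * 2 ^ (3 - 1 - 1)) / 2 ^ (3 - 1 - 1) = 1; norm_num
        rw [m3, Rcol1] at hne0
        have f2 : midIdx (3 - 1 - 1) (k : ℕ) = 2 := by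
          by_contra hc; rw [if_neg hc, zero_mul, mul_zero] at hne0; exact hne0 rfl
        have f2' : (k : ℕ) % (4 * 2 ^ (3 - 1 - 1)) / 2 ^ (3 - 1 - 1) = 2 :=
          congrArg Fin.val f2
        have hj2 : (j0 : ℕ) = 2 := rfl
        have hklt : (k : ℕ) < 2 ^ 3 := k.isLt
        rw [hj2] at f1 f3
        have E : (2:ℕ) ^ (3 - 1 - 1) = 2 := rfl
        rw [E] at f1 f3 f2'
        have hk4 : (k : ℕ) = 4 := by omega
        exact hk (Fin.ext hk4)
      rw [hB1, mul_zero]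
end
end

section
/- Suppose there exists an integer k ≥ 1 with (αβ)^k = 1 and γ^{2k} = 1 (i.e. all eigenvalues of R are roots of unity). Then for every n ≥ 2 the group G_n, the image of the n-strand braid group under the representation σ_i ↦ B_i, is a finite group. -/
open Matrix

noncomputable section

namespace Stmt9aux

variable {N : ℕ}

def IsMon (m : ℕ) (M : Matrix (Fin N) (Fin N) ℂ) : Prop :=
  ∃ σ : Equiv.Perm (Fin N), ∃ u : Fin N → ℂ,
    (∀ x, u x ^ m = 1) ∧ ∀ j x, M j x = if j = σ x then u x else 0

theorem isMon_one (m : ℕ) : IsMon m (1 : Matrix (Fin N) (Fin N) ℂ) := by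
  refine ⟨1, fun _ => 1, fun x => one_pow m, fun j x => ?_⟩
  simp [Matrix.one_apply, eq_comm]
  congr

theorem isMon_mul {m : ℕ} {M M' : Matrix (Fin N) (Fin N) ℂ}
    (h : IsMon m M) (h' : IsMon m M') : IsMon m (M * M') := by
  obtain ⟨σ, u, hu, hM⟩ := h
  obtain ⟨σ', u', hu', hM'⟩ := h'
  refine ⟨σ * σ', fun x => u (σ' x) * u' x, fun x => by
    rw [mul_pow, hu, hu', one_mul], fun j x => ?_⟩
  have : ∀ l, M j l * M' l x = (if l = σ' x then M j l * u' x else 0) := by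
    intro l; rw [hM']; split <;> simp
  rw [Matrix.mul_apply]
  simp only [this]
  rw [Finset.sum_ite_eq' Finset.univ (σ' x) (fun l => M j l * u' x)]
  simp only [Finset.mem_univ, if_true, hM]
  by_cases hj : j = σ (σ' x) <;> simp [hj, Equiv.Perm.mul_apply]

theorem isMon_inv {m : ℕ} (hm : 0 < m) {M M' : Matrix (Fin N) (Fin N) ℂ}
    (h : IsMon m M) (h1 : M' * M = 1) : IsMon m M' := by
  obtain ⟨σ, u, hu, hM⟩ := h
  have hune : ∀ x, u x ≠ 0 := by
    intro x hx
    have := hu x; rw [hx, zero_pow hm.ne'] at this; exact zero_ne_one this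
  set N₀ : Matrix (Fin N) (Fin N) ℂ :=
    Matrix.of (fun j x => if j = σ⁻¹ x then (u (σ⁻¹ x))⁻¹ else 0) with hN₀
  have hMN₀ : M * N₀ = 1 := by
    ext j x
    rw [Matrix.mul_apply]
    have : ∀ l, M j l * N₀ l x = (if l = σ⁻¹ x then M j l * (u (σ⁻¹ x))⁻¹ else 0) := by
      intro l; rw [hN₀]; dsimp only [Matrix.of_apply]; split <;> simp
    simp only [this]
    rw [Finset.sum_ite_eq' Finset.univ (σ⁻¹ x) (fun l => M j l * (u (σ⁻¹ x))⁻¹)]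
    simp only [Finset.mem_univ, if_true, hM]
    by_cases hj : j = σ (σ⁻¹ x)
    · rw [Equiv.Perm.coe_inv, Equiv.apply_symm_apply] at hj
      simp [hj, Equiv.Perm.coe_inv, Equiv.apply_symm_apply, mul_inv_cancel₀ (hune _), Matrix.one_apply]
    · rw [Equiv.Perm.coe_inv, Equiv.apply_symm_apply] at hj
      simp [hj, Matrix.one_apply, Equiv.Perm.coe_inv, Equiv.apply_symm_apply]
  have hM'N₀ : M' = N₀ := by
    calc M' = M' * (M * N₀) := by rw [hMN₀, mul_one]
    _ = (M' * M) * N₀ := by rw [mul_assoc]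
    _ = N₀ := by rw [h1, one_mul]
  refine ⟨σ⁻¹, fun x => (u (σ⁻¹ x))⁻¹, fun x => ?_, fun j x => by rw [hM'N₀]; rfl⟩
  dsimp only; rw [inv_pow, hu, inv_one]
def wfun (n : ℕ) (v : ℕ) : ℤ :=
  -∑ j ∈ Finset.range n, (j : ℤ) * ((v / 2 ^ j % 2 : ℕ) : ℤ)

lemma div_low {b e j : ℕ} (hj : j ≤ e) (t : ℕ) :
    (b + 2 ^ e * t) / 2 ^ j = b / 2 ^ j + 2 ^ (e - j) * t := by
  have h : 2 ^ e = 2 ^ j * 2 ^ (e - j) := by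
    rw [← pow_add]; congr 1; omega
  rw [h, mul_assoc, Nat.add_mul_div_left _ _ (pow_pos (by norm_num) j)]

lemma div_high {b e j : ℕ} (hj : e ≤ j) (hb : b < 2 ^ e) (t : ℕ) :
    (b + 2 ^ e * t) / 2 ^ j = t / 2 ^ (j - e) := by
  have h : 2 ^ j = 2 ^ e * 2 ^ (j - e) := by
    rw [← pow_add]; congr 1; omega
  rw [h, ← Nat.div_div_eq_div_mul,
    Nat.add_mul_div_left _ _ (pow_pos (by norm_num) e),
    Nat.div_eq_of_lt hb, zero_add]

lemma bit_eq {e a b : ℕ} (hb : b < 2 ^ e) (j : ℕ) (hj : j ≠ e) (hj' : j ≠ e + 1) :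
    (b + 2 ^ e * (1 + 4 * a)) / 2 ^ j % 2 = (b + 2 ^ e * (2 + 4 * a)) / 2 ^ j % 2 := by
  rcases lt_or_ge j e with h | h
  · rw [div_low h.le, div_low h.le]
    have h2 : ∀ t : ℕ, 2 ^ (e - j) * t = 2 * (2 ^ (e - j - 1) * t) := by
      intro t
      rw [← mul_assoc]; congr 1
      rw [← pow_succ']; congr 1; omega
    rw [h2 (1 + 4 * a), h2 (2 + 4 * a), Nat.add_mul_mod_self_left, Nat.add_mul_mod_self_left]
  · have hj2 : e + 2 ≤ j := by omega
    rw [div_high h hb, div_high h hb]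
    have h4 : 2 ^ (j - e) = 4 * 2 ^ (j - e - 2) := by
      have : (4 : ℕ) = 2 ^ 2 := by norm_num
      rw [this, ← pow_add]; congr 1; omega
    have e1 : (1 + 4 * a) / 4 = a := by
      rw [Nat.add_mul_div_left _ _ (by norm_num : (0:ℕ) < 4)]; norm_num
    have e2 : (2 + 4 * a) / 4 = a := by
      rw [Nat.add_mul_div_left _ _ (by norm_num : (0:ℕ) < 4)]; norm_num
    rw [h4, ← Nat.div_div_eq_div_mul, ← Nat.div_div_eq_div_mul, e1, e2]

lemma bit_at_e {e a b : ℕ} (hb : b < 2 ^ e) :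
    (b + 2 ^ e * (1 + 4 * a)) / 2 ^ e % 2 = 1 ∧
    (b + 2 ^ e * (2 + 4 * a)) / 2 ^ e % 2 = 0 := by
  rw [div_high le_rfl hb, div_high le_rfl hb]
  simp only [Nat.sub_self, pow_zero, Nat.div_one]
  omega

lemma bit_at_e1 {e a b : ℕ} (hb : b < 2 ^ e) :
    (b + 2 ^ e * (1 + 4 * a)) / 2 ^ (e + 1) % 2 = 0 ∧
    (b + 2 ^ e * (2 + 4 * a)) / 2 ^ (e + 1) % 2 = 1 := by
  rw [div_high (Nat.le_succ e) hb, div_high (Nat.le_succ e) hb]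
  have h1 : e + 1 - e = 1 := by omega
  rw [h1, pow_one]
  omega

lemma wdiff {n e a b : ℕ} (hen : e + 1 < n) (hb : b < 2 ^ e) :
    wfun n (b + 2 ^ e * (1 + 4 * a)) = wfun n (b + 2 ^ e * (2 + 4 * a)) + 1 := by
  unfold wfun
  rw [neg_eq_iff_eq_neg, neg_add, neg_neg]
  have key : ∑ j ∈ Finset.range n,
      ((j : ℤ) * ((b + 2 ^ e * (2 + 4 * a)) / 2 ^ j % 2 : ℕ)
        - (j : ℤ) * ((b + 2 ^ e * (1 + 4 * a)) / 2 ^ j % 2 : ℕ)) = 1 := by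
    rw [← Finset.sum_subset (s₁ := {e, e + 1}) (by
        intro x hx
        simp only [Finset.mem_insert, Finset.mem_singleton] at hx
        rcases hx with h | h <;> simp [Finset.mem_range] <;> omega)]
    · rw [Finset.sum_pair (by omega : e ≠ e + 1)]
      rw [(bit_at_e (a := a) hb).1, (bit_at_e (a := a) hb).2,
        (bit_at_e1 (a := a) hb).1, (bit_at_e1 (a := a) hb).2]
      push_cast
      ring
    · intro x _ hx
      simp only [Finset.mem_insert, Finset.mem_singleton, not_or] at hx
      rw [bit_eq hb x hx.1 hx.2]
      ring
  rw [← key]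
  rw [Finset.sum_sub_distrib]
  ring

section
variable (α β γ : ℂ) (n i : ℕ)

def Emap (h : 2 ^ (i - 1) * (4 * 2 ^ (n - i - 1)) = 2 ^ n) :
    (Fin (2 ^ (i - 1)) × (Fin 4 × Fin (2 ^ (n - i - 1)))) ≃ Fin (2 ^ n) :=
  ((Equiv.refl _).prodCongr finProdFinEquiv).trans (finProdFinEquiv.trans (finCongr h))

lemma Bmat_entry (h : 2 ^ (i - 1) * (4 * 2 ^ (n - i - 1)) = 2 ^ n)
    (a a' : Fin (2 ^ (i - 1))) (m m' : Fin 4) (b b' : Fin (2 ^ (n - i - 1))) :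
    Bmat α β γ n i (Emap n i h (a, (m, b))) (Emap n i h (a', (m', b'))) =
      (if a = a' then 1 else 0) * (Rmat α β γ m m' * if b = b' then 1 else 0) := by
  simp [Bmat, triKron, dif_pos h, kron, Emap, Matrix.one_apply]

lemma Emap_val (h : 2 ^ (i - 1) * (4 * 2 ^ (n - i - 1)) = 2 ^ n)
    (a : Fin (2 ^ (i - 1))) (m : Fin 4) (b : Fin (2 ^ (n - i - 1))) :
    ((Emap n i h (a, (m, b))) : ℕ) = b.val + 2 ^ (n - i - 1) * (m.val + 4 * a.val) := by
  simp [Emap, finProdFinEquiv]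
  ring

end

section
variable {α β γ : ℂ}

lemma gen_mon (hα : α ≠ 0) {k n i : ℕ} (hk : 1 ≤ k)
    (hαβ : (α * β) ^ k = 1) (hγ : γ ^ (2 * k) = 1)
    (hi : 1 ≤ i) (hin : i ≤ n - 1) (hn : 2 ≤ n) :
    IsMon (2 * k) (Matrix.diagonal (fun x : Fin (2 ^ n) => α ^ (-(wfun n x.val))) *
      Bmat α β γ n i * Matrix.diagonal (fun x : Fin (2 ^ n) => α ^ (wfun n x.val))) := by
  have h : 2 ^ (i - 1) * (4 * 2 ^ (n - i - 1)) = 2 ^ n := by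
    rw [show (4 : ℕ) = 2 ^ 2 by norm_num, ← pow_add, ← pow_add]
    congr 1; omega
  set E := Emap n i h with hE
  set τ : Equiv.Perm (Fin 4) := Equiv.swap 1 2 with hτ
  set σ : Equiv.Perm (Fin (2 ^ n)) :=
    (Equiv.permCongr E) ((Equiv.refl (Fin (2 ^ (i-1)))).prodCongr
      (τ.prodCongr (Equiv.refl (Fin (2 ^ (n-i-1)))))) with hσ
  have hσE : ∀ a m b, σ (E (a, (m, b))) = E (a, (τ m, b)) := by
    intro a m b
    simp [hσ, Equiv.permCongr_apply]
  set M := Matrix.diagonal (fun x : Fin (2 ^ n) => α ^ (-(wfun n x.val))) *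
      Bmat α β γ n i * Matrix.diagonal (fun x : Fin (2 ^ n) => α ^ (wfun n x.val)) with hM
  have hMe : ∀ j x, M j x = α ^ (-(wfun n j.val)) * Bmat α β γ n i j x * α ^ (wfun n x.val) := by
    intro j x
    rw [hM, Matrix.mul_diagonal, Matrix.diagonal_mul]
  refine ⟨σ, fun x => M (σ x) x, fun x => ?_, fun j x => ?_⟩
  · -- root of unity condition
    obtain ⟨⟨a, m, b⟩, rfl⟩ := E.surjective x
    show M (σ (E (a, (m, b)))) (E (a, (m, b))) ^ (2 * k) = 1
    rw [hσE, hMe, Bmat_entry α β γ n i h, if_pos rfl, if_pos rfl, one_mul, mul_one]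
    have hQ : (b : ℕ) < 2 ^ (n - i - 1) := b.isLt
    have hen : (n - i - 1) + 1 < n := by omega
    have hm4 : m = 0 ∨ m = 1 ∨ m = 2 ∨ m = 3 := by fin_cases m <;> simp <;> decide
    rcases hm4 with rfl | rfl | rfl | rfl
    · -- m = 0 : τ 0 = 0
      have hτ0 : τ (0 : Fin 4) = 0 := by rw [hτ]; decide
      rw [hτ0]
      have : Rmat α β γ 0 0 = 1 := by simp [Rmat]
      rw [this, mul_one, ← zpow_add₀ hα, neg_add_cancel, zpow_zero, one_pow]
    · -- m = 1 : τ 1 = 2, entry R 2 1 = β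
      have hτ1 : τ (1 : Fin 4) = 2 := by rw [hτ]; decide
      rw [hτ1]
      have hR : Rmat α β γ 2 1 = β := by simp [Rmat]
      rw [hR]
      have hv1 : ((E (a, ((1 : Fin 4), b))) : ℕ) = (b : ℕ) + 2 ^ (n - i - 1) * (1 + 4 * a) := by
        rw [hE, Stmt9aux.Emap_val]; norm_num
      have hv2 : ((E (a, ((2 : Fin 4), b))) : ℕ) = (b : ℕ) + 2 ^ (n - i - 1) * (2 + 4 * a) := by
        rw [hE, Stmt9aux.Emap_val]; norm_num
      have hw : wfun n ((E (a, ((1 : Fin 4), b))) : ℕ)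
          = wfun n ((E (a, ((2 : Fin 4), b))) : ℕ) + 1 := by
        rw [hv1, hv2]; exact wdiff hen hQ
      rw [hw]
      have : α ^ (-(wfun n ((E (a, ((2:Fin 4), b))) : ℕ))) * β *
          α ^ (wfun n ((E (a, ((2:Fin 4), b))) : ℕ) + 1) = α * β := by
        rw [zpow_add₀ hα, zpow_one]
        field_simp [zpow_ne_zero]
        try ring
        rw [mul_comm _ β, mul_assoc, ← zpow_add₀ hα, neg_add_cancel, zpow_zero, mul_one]
      rw [this, show 2 * k = k * 2 by ring, pow_mul, hαβ, one_pow]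
    · -- m = 2 : τ 2 = 1, entry R 1 2 = α
      have hτ2 : τ (2 : Fin 4) = 1 := by rw [hτ]; decide
      rw [hτ2]
      have hR : Rmat α β γ 1 2 = α := by simp [Rmat]
      rw [hR]
      have hv1 : ((E (a, ((1 : Fin 4), b))) : ℕ) = (b : ℕ) + 2 ^ (n - i - 1) * (1 + 4 * a) := by
        rw [hE, Stmt9aux.Emap_val]; norm_num
      have hv2 : ((E (a, ((2 : Fin 4), b))) : ℕ) = (b : ℕ) + 2 ^ (n - i - 1) * (2 + 4 * a) := by
        rw [hE, Stmt9aux.Emap_val]; norm_num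
      have hw : wfun n ((E (a, ((1 : Fin 4), b))) : ℕ)
          = wfun n ((E (a, ((2 : Fin 4), b))) : ℕ) + 1 := by
        rw [hv1, hv2]; exact wdiff hen hQ
      have : α ^ (-(wfun n ((E (a, ((1:Fin 4), b))) : ℕ))) * α *
          α ^ (wfun n ((E (a, ((2:Fin 4), b))) : ℕ)) = 1 := by
        rw [hw]
        rw [_root_.zpow_neg, zpow_add₀ hα, zpow_one]
        field_simp [zpow_ne_zero]
        try ring
      rw [this, one_pow]
    · -- m = 3 : τ 3 = 3, entry γ
      have hτ3 : τ (3 : Fin 4) = 3 := by rw [hτ]; decide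
      rw [hτ3]
      have hR : Rmat α β γ 3 3 = γ := by simp [Rmat]
      rw [hR]
      have : α ^ (-(wfun n ((E (a, ((3:Fin 4), b))) : ℕ))) * γ *
          α ^ (wfun n ((E (a, ((3:Fin 4), b))) : ℕ)) = γ := by
        rw [_root_.zpow_neg]
        field_simp [zpow_ne_zero]
        try ring
      rw [this]
      exact hγ
  · -- shape condition
    by_cases hj : j = σ x
    · rw [if_pos hj, hj]
    · rw [if_neg hj, hMe]
      obtain ⟨⟨a, m, b⟩, rfl⟩ := E.surjective x
      obtain ⟨⟨a', m', b'⟩, rfl⟩ := E.surjective j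
      rw [hσE] at hj
      have hne : (a', (m', b')) ≠ (a, (τ m, b)) := fun hc => hj (by rw [hc])
      rw [Bmat_entry α β γ n i h]
      rcases eq_or_ne a' a with ha | ha
      · rcases eq_or_ne b' b with hb | hb
        · have hm : m' ≠ τ m := by
            intro hc; exact hne (by rw [ha, hb, hc])
          have : Rmat α β γ m' m = 0 := by
            rw [hτ] at hm
            fin_cases m <;> fin_cases m' <;>
              first
                | exact absurd (by decide) hm
                | simp [Rmat, Matrix.vecHead, Matrix.vecTail]
          rw [this]; ring
        · rw [if_neg hb]; ring
      · rw [if_neg ha]; ring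

end

theorem main (α β γ : ℂ) (hα : α ≠ 0) (hβ : β ≠ 0) (hγ : γ ≠ 0)
    (hroots : ∃ k : ℕ, 1 ≤ k ∧ (α * β) ^ k = 1 ∧ γ ^ (2 * k) = 1) :
    ∀ n : ℕ, 2 ≤ n → Finite (Subgroup.closure
      {g : GL (Fin (2 ^ n)) ℂ | ∃ i : ℕ, 1 ≤ i ∧ i ≤ n - 1 ∧
        (g : Matrix (Fin (2 ^ n)) (Fin (2 ^ n)) ℂ) = Bmat α β γ n i}) := by
  obtain ⟨k, hk, hαβ, hγk⟩ := hroots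
  intro n hn
  have hm : 0 < 2 * k := by omega
  set d : Fin (2 ^ n) → ℂ := fun x => α ^ (wfun n x.val) with hd
  set d' : Fin (2 ^ n) → ℂ := fun x => α ^ (-(wfun n x.val)) with hd'
  set Δ : Matrix (Fin (2 ^ n)) (Fin (2 ^ n)) ℂ := Matrix.diagonal d with hΔdef
  set Δ' : Matrix (Fin (2 ^ n)) (Fin (2 ^ n)) ℂ := Matrix.diagonal d' with hΔ'def
  have hdd : ∀ x, d x * d' x = 1 := by
    intro x
    rw [hd, hd', ← zpow_add₀ hα, add_neg_cancel, zpow_zero]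
  have hΔ : Δ * Δ' = 1 := by
    rw [hΔdef, hΔ'def, Matrix.diagonal_mul_diagonal,
      show (fun i => d i * d' i) = fun _ => (1 : ℂ) from funext hdd, Matrix.diagonal_one]
  have hΔ' : Δ' * Δ = 1 := by
    rw [hΔdef, hΔ'def, Matrix.diagonal_mul_diagonal,
      show (fun i => d' i * d i) = fun _ => (1 : ℂ) from
        funext (fun x => by rw [mul_comm]; exact hdd x), Matrix.diagonal_one]
  have hΔX : ∀ X : Matrix (Fin (2 ^ n)) (Fin (2 ^ n)) ℂ, Δ * (Δ' * X) = X := by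
    intro X; rw [← mul_assoc, hΔ, one_mul]
  set S : Subgroup (GL (Fin (2 ^ n)) ℂ) :=
    { carrier := {g | IsMon (2 * k) (Δ' * (g : Matrix (Fin (2 ^ n)) (Fin (2 ^ n)) ℂ) * Δ)}
      one_mem' := by
        show IsMon (2 * k) (Δ' * ((1 : GL (Fin (2 ^ n)) ℂ) : Matrix _ _ ℂ) * Δ)
        rw [Units.val_one, mul_one, hΔ']
        exact isMon_one (2 * k)
      mul_mem' := by
        intro a b ha hb
        show IsMon (2 * k) (Δ' * ((a * b : GL (Fin (2 ^ n)) ℂ) : Matrix _ _ ℂ) * Δ)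
        have key : Δ' * ((a * b : GL (Fin (2 ^ n)) ℂ) : Matrix _ _ ℂ) * Δ
            = (Δ' * (a : Matrix _ _ ℂ) * Δ) * (Δ' * (b : Matrix _ _ ℂ) * Δ) := by
          rw [Units.val_mul]
          simp only [mul_assoc]
          rw [hΔX]
        rw [key]
        exact isMon_mul ha hb
      inv_mem' := by
        intro a ha
        show IsMon (2 * k) (Δ' * ((a⁻¹ : GL (Fin (2 ^ n)) ℂ) : Matrix _ _ ℂ) * Δ)
        refine isMon_inv hm ha ?_
        have key : (Δ' * ((a⁻¹ : GL (Fin (2 ^ n)) ℂ) : Matrix _ _ ℂ) * Δ)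
            * (Δ' * (a : Matrix _ _ ℂ) * Δ)
            = Δ' * (((a⁻¹ * a : GL (Fin (2 ^ n)) ℂ)) : Matrix _ _ ℂ) * Δ := by
          rw [Units.val_mul]
          simp only [mul_assoc]
          rw [hΔX]
        rw [key, inv_mul_cancel, Units.val_one, mul_one, hΔ'] } with hS
  have hgen : {g : GL (Fin (2 ^ n)) ℂ | ∃ i : ℕ, 1 ≤ i ∧ i ≤ n - 1 ∧
      (g : Matrix (Fin (2 ^ n)) (Fin (2 ^ n)) ℂ) = Bmat α β γ n i} ⊆ (S : Set _) := by
    rintro g ⟨i, hi, hin, hg⟩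
    show IsMon (2 * k) (Δ' * (g : Matrix _ _ ℂ) * Δ)
    rw [hg]
    exact gen_mon hα hk hαβ hγk hi hin hn
  have hle : Subgroup.closure {g : GL (Fin (2 ^ n)) ℂ | ∃ i : ℕ, 1 ≤ i ∧ i ≤ n - 1 ∧
      (g : Matrix (Fin (2 ^ n)) (Fin (2 ^ n)) ℂ) = Bmat α β γ n i} ≤ S :=
    (Subgroup.closure_le S).2 hgen
  -- Build injection into a finite type
  set G := Subgroup.closure {g : GL (Fin (2 ^ n)) ℂ | ∃ i : ℕ, 1 ≤ i ∧ i ≤ n - 1 ∧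
      (g : Matrix (Fin (2 ^ n)) (Fin (2 ^ n)) ℂ) = Bmat α β γ n i} with hG
  set T := Equiv.Perm (Fin (2 ^ n)) ×
    (Fin (2 ^ n) → (Polynomial.nthRootsFinset (2 * k) (1 : ℂ) : Finset ℂ)) with hT
  have memMon : ∀ g : G, IsMon (2 * k) (Δ' * ((g : GL (Fin (2 ^ n)) ℂ) : Matrix _ _ ℂ) * Δ) :=
    fun g => hle g.2
  set F : G → T := fun g =>
    ⟨(memMon g).choose, fun x => ⟨(memMon g).choose_spec.choose x, by
      rw [Polynomial.mem_nthRootsFinset hm (1 : ℂ)]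
      exact (memMon g).choose_spec.choose_spec.1 x⟩⟩ with hF
  have hFinj : Function.Injective F := by
    intro g₁ g₂ hfg
    have h1 := (memMon g₁).choose_spec.choose_spec.2
    have h2 := (memMon g₂).choose_spec.choose_spec.2
    have hσ : (memMon g₁).choose = (memMon g₂).choose := congrArg Prod.fst hfg
    have hu : ∀ x, (memMon g₁).choose_spec.choose x = (memMon g₂).choose_spec.choose x := by
      intro x
      have := congrFun (congrArg Prod.snd hfg) x
      exact Subtype.ext_iff.1 this
    have hmat : Δ' * ((g₁ : GL (Fin (2 ^ n)) ℂ) : Matrix _ _ ℂ) * Δ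
        = Δ' * ((g₂ : GL (Fin (2 ^ n)) ℂ) : Matrix _ _ ℂ) * Δ := by
      ext j x
      rw [h1 j x, h2 j x]
      simp only [hσ, hu]
    have hmat2 : ((g₁ : GL (Fin (2 ^ n)) ℂ) : Matrix (Fin (2 ^ n)) (Fin (2 ^ n)) ℂ)
        = ((g₂ : GL (Fin (2 ^ n)) ℂ) : Matrix (Fin (2 ^ n)) (Fin (2 ^ n)) ℂ) := by
      have := congrArg (fun X => Δ * X * Δ') hmat
      simpa only [show ∀ A : Matrix (Fin (2 ^ n)) (Fin (2 ^ n)) ℂ,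
          Δ * (Δ' * A * Δ) * Δ' = A from fun A => by
        simp only [mul_assoc]
        rw [hΔX, hΔ, mul_one]] using this
    exact Subtype.ext (Units.ext hmat2)
  exact Finite.of_injective F hFinj
end Stmt9aux


/-- If all eigenvalues of `R` are roots of unity (there is `k ≥ 1` with `(αβ)^k = 1` and
`γ^{2k} = 1`), then the image `G_n` of the braid group is a finite group, for every `n ≥ 2`. -/
theorem stmt_9 (α β γ : ℂ) (hα : α ≠ 0) (hβ : β ≠ 0) (hγ : γ ≠ 0)
    (hroots : ∃ k : ℕ, 1 ≤ k ∧ (α * β) ^ k = 1 ∧ γ ^ (2 * k) = 1) :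
    ∀ n : ℕ, 2 ≤ n → Finite (Gsub α β γ n) := by
  intro n hn
  exact Stmt9aux.main α β γ hα hβ hγ hroots n hn
end
end

section
/- Suppose γ = 1. Then the partial trace of R over the second tensor factor equals the 2 × 2 identity matrix, and likewise for R⁻¹: for both M = R and M = R⁻¹, the 2 × 2 matrix with (i,j) entry Σ_{k=1}^{2} M_{(i,k),(j,k)} is I₂. Consequently, for every 2ⁿ × 2ⁿ complex matrix A, Trace((A ⊗ I₂)·(I₂^{⊗(n−1)} ⊗ R^{±1})) = Trace(A); this is the Markov-stabilization property underlying Turaev's link invariant T_{R,x}(σ) = x^{n−e(σ)}·Trace(π_n(σ)). -/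
open Matrix

noncomputable section

/-- The partial trace over the second tensor factor of a `4 × 4` matrix, whose rows and
columns are indexed by pairs `(i,k) ∈ {1,2}²` lexicographically:
`(ptr M) i j = Σ_k M_{(i,k),(j,k)}`. -/
def ptr (M : Matrix (Fin 4) (Fin 4) ℂ) : Matrix (Fin 2) (Fin 2) ℂ :=
  Matrix.of fun i j => ∑ k : Fin 2, M (finProdFinEquiv (i, k)) (finProdFinEquiv (j, k))

/-- `I₂^{⊗(n−1)} ⊗ M` as a `2ⁿ·2 × 2ⁿ·2` matrix.  The size condition in the `dite` holds
whenever `n ≥ 1`. -/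
def bigTensor (n : ℕ) (M : Matrix (Fin 4) (Fin 4) ℂ) :
    Matrix (Fin (2 ^ n * 2)) (Fin (2 ^ n * 2)) ℂ :=
  if h : 2 ^ (n - 1) * 4 = 2 ^ n * 2 then
    Matrix.reindex (finCongr h) (finCongr h)
      (kron (1 : Matrix (Fin (2 ^ (n - 1))) (Fin (2 ^ (n - 1))) ℂ) M)
  else 1


lemma kron_apply {a b : ℕ} (A : Matrix (Fin a) (Fin a) ℂ) (B : Matrix (Fin b) (Fin b) ℂ)
    (p q : Fin a) (k l : Fin b) :
    kron A B (finProdFinEquiv (p, k)) (finProdFinEquiv (q, l)) = A p q * B k l := by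
  simp [kron]

lemma key (n : ℕ) (hn : 1 ≤ n) (M : Matrix (Fin 4) (Fin 4) ℂ) (hM : ptr M = 1)
    (A : Matrix (Fin (2 ^ n)) (Fin (2 ^ n)) ℂ) :
    Matrix.trace (kron A (1 : Matrix (Fin 2) (Fin 2) ℂ) * bigTensor n M) =
      Matrix.trace A := by
  have hpred : n - 1 + 1 = n := Nat.succ_pred_eq_of_pos hn
  have h2 : 2 ^ (n - 1) * 2 = 2 ^ n := by
    calc 2 ^ (n - 1) * 2 = 2 ^ (n - 1 + 1) := (pow_succ 2 (n - 1)).symm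
    _ = 2 ^ n := by rw [hpred]
  have h : 2 ^ (n - 1) * 4 = 2 ^ n * 2 := by rw [← h2]; ring
  set x : Fin (2 ^ (n - 1)) → Fin 2 → Fin (2 ^ n) :=
    fun p i => finCongr h2 (finProdFinEquiv (p, i)) with hx
  set E : Fin (2 ^ (n - 1)) × (Fin 2 × Fin 2) ≃ Fin (2 ^ n * 2) :=
    ((Equiv.refl (Fin (2 ^ (n-1)))).prodCongr finProdFinEquiv).trans
      (finProdFinEquiv.trans (finCongr h)) with hEdef
  have hE : ∀ (p : Fin (2 ^ (n-1))) (i k : Fin 2),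
      E (p, i, k) = finProdFinEquiv (x p i, k) := by
    intro p i k
    apply Fin.ext
    simp only [hEdef, hx, Equiv.trans_apply, Equiv.prodCongr_apply, Equiv.coe_refl,
      Prod.map, id, finCongr_apply, Fin.coe_cast, finProdFinEquiv_apply_val]
    ring
  have hbig : ∀ (p q : Fin (2 ^ (n-1))) (i k j l : Fin 2),
      bigTensor n M (E (q, j, l)) (E (p, i, k)) =
        (1 : Matrix (Fin (2^(n-1))) (Fin (2^(n-1))) ℂ) q p
          * M (finProdFinEquiv (j, l)) (finProdFinEquiv (i, k)) := by
    intro p q i k j l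
    rw [bigTensor, dif_pos h]
    show (Matrix.reindex (finCongr h) (finCongr h)
        (kron (1 : Matrix (Fin (2 ^ (n - 1))) (Fin (2 ^ (n - 1))) ℂ) M))
        (finCongr h (finProdFinEquiv (q, finProdFinEquiv (j, l))))
        (finCongr h (finProdFinEquiv (p, finProdFinEquiv (i, k)))) = _
    simp [kron_apply]
  have hkr : ∀ (p q : Fin (2 ^ (n-1))) (i k j l : Fin 2),
      kron A (1 : Matrix (Fin 2) (Fin 2) ℂ) (E (p, i, k)) (E (q, j, l)) =
        A (x p i) (x q j) * (1 : Matrix (Fin 2) (Fin 2) ℂ) k l := by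
    intro p q i k j l
    rw [hE, hE, kron_apply]
  have hptr : ∀ j i : Fin 2,
      ∑ k : Fin 2, M (finProdFinEquiv (j, k)) (finProdFinEquiv (i, k)) =
        (1 : Matrix (Fin 2) (Fin 2) ℂ) j i := by
    intro j i; rw [← hM]; rfl
  rw [Matrix.trace, ← Equiv.sum_comp E (fun z => Matrix.diag _ z)]
  have step1 : ∀ t : Fin (2 ^ (n-1)) × (Fin 2 × Fin 2),
      Matrix.diag (kron A (1 : Matrix (Fin 2) (Fin 2) ℂ) * bigTensor n M) (E t) =
        ∑ s : Fin (2 ^ (n-1)) × (Fin 2 × Fin 2),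
          A (x t.1 t.2.1) (x s.1 s.2.1) * (1 : Matrix (Fin 2) (Fin 2) ℂ) t.2.2 s.2.2
            * ((1 : Matrix (Fin (2^(n-1))) (Fin (2^(n-1))) ℂ) s.1 t.1
              * M (finProdFinEquiv (s.2.1, s.2.2)) (finProdFinEquiv (t.2.1, t.2.2))) := by
    rintro ⟨p, i, k⟩
    rw [Matrix.diag_apply, Matrix.mul_apply, ← Equiv.sum_comp E]
    refine Finset.sum_congr rfl fun s _ => ?_
    obtain ⟨q, j, l⟩ := s
    rw [hkr, hbig]
  rw [Finset.sum_congr rfl fun t _ => step1 t]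
  simp only [Fintype.sum_prod_type, Matrix.one_apply, mul_ite, mul_one, mul_zero,
    ite_mul, zero_mul, Finset.sum_ite_eq, Finset.sum_ite_eq', Finset.mem_univ, if_true,
    Finset.sum_ite_irrel, Finset.sum_const_zero]
  simp only [one_mul]
  rw [Matrix.trace, ← Equiv.sum_comp (finProdFinEquiv.trans (finCongr h2))
    (fun z => Matrix.diag A z), Fintype.sum_prod_type]
  refine Finset.sum_congr rfl fun p _ => Finset.sum_congr rfl fun i _ => ?_
  rw [Finset.sum_comm]
  calc ∑ j : Fin 2, ∑ k : Fin 2,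
        A (x p i) (x p j) * M (finProdFinEquiv (j, k)) (finProdFinEquiv (i, k))
      = ∑ j : Fin 2, A (x p i) (x p j)
          * ∑ k : Fin 2, M (finProdFinEquiv (j, k)) (finProdFinEquiv (i, k)) := by
        simp only [Finset.mul_sum]
    _ = ∑ j : Fin 2, A (x p i) (x p j) * (1 : Matrix (Fin 2) (Fin 2) ℂ) j i := by
        simp only [hptr]
    _ = A (x p i) (x p i) := by simp [Matrix.one_apply]
    _ = Matrix.diag A ((finProdFinEquiv.trans (finCongr h2)) (p, i)) := rfl

/-- For `γ = 1`: the partial trace of `R` (and of `R⁻¹`) over the second tensor factor is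
`I₂`, and consequently `Trace((A ⊗ I₂)·(I₂^{⊗(n−1)} ⊗ R^{±1})) = Trace(A)` for every
`2ⁿ × 2ⁿ` matrix `A` — the Markov-stabilization property underlying Turaev's link
invariant `T_{R,x}(σ) = x^{n−e(σ)}·Trace(π_n(σ))`. -/
theorem stmt_12 (n : ℕ) (hn : 2 ≤ n) (α β : ℂ) (hα : α ≠ 0) (hβ : β ≠ 0) :
    ptr (Rmat α β 1) = 1 ∧ ptr ((Rmat α β 1)⁻¹) = 1 ∧
    ∀ A : Matrix (Fin (2 ^ n)) (Fin (2 ^ n)) ℂ,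
      Matrix.trace (kron A (1 : Matrix (Fin 2) (Fin 2) ℂ) * bigTensor n (Rmat α β 1)) =
        Matrix.trace A ∧
      Matrix.trace (kron A (1 : Matrix (Fin 2) (Fin 2) ℂ) * bigTensor n ((Rmat α β 1)⁻¹)) =
        Matrix.trace A := by
  have hR : ptr (Rmat α β 1) = 1 := by
    ext i j
    fin_cases i <;> fin_cases j <;>
      simp [ptr, Rmat, Fin.sum_univ_two, finProdFinEquiv, Matrix.one_apply,
        Matrix.vecHead, Matrix.vecTail]
  have hRinv : (Rmat α β 1)⁻¹ = !![1,0,0,0; 0,0,β⁻¹,0; 0,α⁻¹,0,0; 0,0,0,1] := by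
    apply Matrix.inv_eq_right_inv
    ext i j
    fin_cases i <;> fin_cases j <;>
      simp [Matrix.mul_apply, Fin.sum_univ_four, Rmat, Matrix.one_apply, hα, hβ,
        Matrix.vecHead, Matrix.vecTail, mul_inv_cancel₀]
  have hRi : ptr ((Rmat α β 1)⁻¹) = 1 := by
    rw [hRinv]
    ext i j
    fin_cases i <;> fin_cases j <;>
      simp [ptr, Fin.sum_univ_two, finProdFinEquiv, Matrix.one_apply,
        Matrix.vecHead, Matrix.vecTail]
  exact ⟨hR, hRi, fun A => ⟨key n (by omega) _ hR A, key n (by omega) _ hRi A⟩⟩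
end
end
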